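/- Let F be strictly convex, let S be convex, and let I ≠ ∅. Suppose that for every x ∈ S the farthest projection P_F(x; Ω_i) is nonempty for all i ∈ I. Then the set of minimizers over S of the function C₁(x) := max{C_F(x; Ω_i) : i ∈ I} has at most one element. -/

import Mathlib

open Set Pointwise Filter Topology Bornology Function

variable {X : Type*} [NormedAddCommGroup X] [NormedSpace ℝ X]

/-- The Minkowski gauge of `F`: `ρ_F(x) = inf {t ≥ 0 : x ∈ t • F}`. -/
noncomputable def rhoF (F : Set X) (x : X) : ℝ :=
  sInf {t : ℝ | 0 ≤ t ∧ x ∈ t • F}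

/-- The maximal time function `C_F(x; Q) = sup {ρ_F(q - x) : q ∈ Q}`. -/
noncomputable def maxTime (F Q : Set X) (x : X) : ℝ :=
  sSup ((fun q => rhoF F (q - x)) '' Q)

/-- The minimal time function `T_F(x; Θ) = inf {ρ_F(q - x) : q ∈ Θ}`. -/
noncomputable def minTime (F Θ : Set X) (x : X) : ℝ :=
  sInf ((fun q => rhoF F (q - x)) '' Θ)

/-- The farthest projection `P_F(x; Ω) = {ω ∈ Ω : ρ_F(ω - x) = C_F(x; Ω)}`. -/
def farProj (F Ω : Set X) (x : X) : Set X :=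
  {ω ∈ Ω | rhoF F (ω - x) = maxTime F Ω x}

lemma rhoF_eq_gauge (F : Set X) (h0 : (0 : X) ∈ F) (x : X) : rhoF F x = gauge F x := by
  rcases eq_or_ne x 0 with rfl | hx
  · rw [gauge_zero]
    refine le_antisymm (csInf_le ⟨0, fun t ht => ht.1⟩ ?_) (Real.sInf_nonneg fun t ht => ht.1)
    refine ⟨le_refl 0, ?_⟩
    have : (0:ℝ) • (0:X) ∈ (0:ℝ) • F := Set.smul_mem_smul_set h0
    simpa using this
  · unfold rhoF gauge
    congr 1
    ext t
    constructor
    · rintro ⟨ht, hm⟩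
      rcases ht.lt_or_eq with h | h
      · exact ⟨h, hm⟩
      · exfalso
        rw [← h] at hm
        exact hx (Set.mem_singleton_iff.mp (zero_smul_set_subset F hm))
    · rintro ⟨ht, hm⟩
      exact ⟨ht.le, hm⟩

/-- Corollary 3.6 (i). -/
theorem stmt11 {ι : Type*} (F : Set X) (I : Finset ι) (Ω : ι → Set X) (S : Set X)
    (hFc : IsClosed F) (hFb : IsBounded F) (hFconv : Convex ℝ F)
    (hF0 : (0 : X) ∈ interior F) (hFs : StrictConvex ℝ F)
    (hΩne : ∀ i ∈ I, (Ω i).Nonempty) (hΩc : ∀ i ∈ I, IsClosed (Ω i))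
    (hΩb : ∀ i ∈ I, IsBounded (Ω i))
    (hSne : S.Nonempty) (hSc : IsClosed S) (hSconv : Convex ℝ S)
    (hI : I.Nonempty)
    (hP : ∀ x ∈ S, ∀ i ∈ I, (farProj F (Ω i) x).Nonempty) :
    {x ∈ S | ∀ y ∈ S,
      sSup ((fun i => maxTime F (Ω i) x) '' ↑I) ≤
        sSup ((fun i => maxTime F (Ω i) y) '' ↑I)}.Subsingleton := by
  have h0F : (0 : X) ∈ F := interior_subset hF0
  have hFnhds : F ∈ 𝓝 (0 : X) := mem_interior_iff_mem_nhds.mp hF0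
  have habs : Absorbent ℝ F := absorbent_nhds_zero hFnhds
  have hvb : Bornology.IsVonNBounded ℝ F := (NormedSpace.isVonNBounded_iff ℝ).mpr hFb
  have hrg : ∀ y : X, rhoF F y = gauge F y := rhoF_eq_gauge F h0F
  obtain ⟨r, hr0, hrF⟩ : ∃ r > 0, Metric.ball (0 : X) r ⊆ F := Metric.mem_nhds_iff.mp hFnhds
  have hgle : ∀ y : X, gauge F y ≤ ‖y‖ / r := fun y => by
    rw [← gauge_ball hr0.le]
    exact gauge_mono (absorbent_ball_zero hr0) hrF y
  -- boundedness of the inner families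
  have hbdd : ∀ (x : X), ∀ i ∈ I, BddAbove ((fun q => rhoF F (q - x)) '' Ω i) := by
    intro x i hi
    obtain ⟨R, hR⟩ := (hΩb i hi).subset_closedBall (0 : X)
    refine ⟨(R + ‖x‖) / r, ?_⟩
    rintro _ ⟨q, hq, rfl⟩
    have hq' : ‖q‖ ≤ R := mem_closedBall_zero_iff.mp (hR hq)
    calc rhoF F (q - x) = gauge F (q - x) := hrg _
      _ ≤ ‖q - x‖ / r := hgle _
      _ ≤ (R + ‖x‖) / r := by
          gcongr
          exact (norm_sub_le q x).trans (add_le_add hq' le_rfl)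
  -- each point of Ω i gives a lower bound on maxTime
  have hle_maxTime : ∀ (x : X), ∀ i ∈ I, ∀ q ∈ Ω i,
      rhoF F (q - x) ≤ maxTime F (Ω i) x := by
    intro x i hi q hq
    exact le_csSup (hbdd x i hi) ⟨q, hq, rfl⟩
  -- each maxTime is at most the outer sSup
  have hle_sSup : ∀ (x : X), ∀ i ∈ I,
      maxTime F (Ω i) x ≤ sSup ((fun i => maxTime F (Ω i) x) '' ↑I) := by
    intro x i hi
    exact le_csSup ((I.finite_toSet.image _).bddAbove) ⟨i, hi, rfl⟩
  intro x hx y hy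
  simp only [Set.mem_setOf_eq] at hx hy
  obtain ⟨hxS, hxmin⟩ := hx
  obtain ⟨hyS, hymin⟩ := hy
  by_contra hxy
  set m : ℝ := sSup ((fun i => maxTime F (Ω i) x) '' ↑I) with hm
  have hmy : sSup ((fun i => maxTime F (Ω i) y) '' ↑I) = m :=
    le_antisymm (hymin x hxS) (hxmin y hyS)
  -- the midpoint
  set z : X := (1/2 : ℝ) • x + (1/2 : ℝ) • y with hz
  have hzS : z ∈ S := hSconv hxS hyS (by norm_num) (by norm_num) (by norm_num)
  have hmz : m ≤ sSup ((fun i => maxTime F (Ω i) z) '' ↑I) := hxmin z hzS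
  -- the sup at z is attained at some index i
  have hattain : sSup ((fun i => maxTime F (Ω i) z) '' ↑I) ∈
      ((fun i => maxTime F (Ω i) z) '' ↑I) := by
    refine Set.Nonempty.csSup_mem ?_ (I.finite_toSet.image _)
    exact ⟨_, ⟨hI.choose, hI.choose_spec, rfl⟩⟩
  obtain ⟨i, hi, hieq⟩ := hattain
  obtain ⟨ω, hωΩ, hωeq⟩ := hP z hzS i hi
  have hωz : m ≤ rhoF F (ω - z) := by
    rw [hωeq]; exact le_of_le_of_eq hmz hieq.symm
  have hux : rhoF F (ω - x) ≤ m := (hle_maxTime x i hi ω hωΩ).trans (hle_sSup x i hi)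
  have huy : rhoF F (ω - y) ≤ m := by
    rw [← hmy]
    exact (hle_maxTime y i hi ω hωΩ).trans (hle_sSup y i hi)
  rw [hrg] at hωz hux huy
  have hm0 : 0 ≤ m := (gauge_nonneg (ω - x)).trans hux
  rcases hm0.lt_or_eq with hmpos | hmzero
  · -- m > 0 : strict convexity contradiction
    have hminv : (0:ℝ) < m⁻¹ := inv_pos.mpr hmpos
    set u : X := m⁻¹ • (ω - x) with hu
    set v : X := m⁻¹ • (ω - y) with hv
    have hgu : gauge F u ≤ 1 := by
      rw [hu, gauge_smul_of_nonneg hminv.le, smul_eq_mul]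
      calc m⁻¹ * gauge F (ω - x) ≤ m⁻¹ * m := by
            exact mul_le_mul_of_nonneg_left hux hminv.le
        _ = 1 := inv_mul_cancel₀ hmpos.ne'
    have hgv : gauge F v ≤ 1 := by
      rw [hv, gauge_smul_of_nonneg hminv.le, smul_eq_mul]
      calc m⁻¹ * gauge F (ω - y) ≤ m⁻¹ * m := by
            exact mul_le_mul_of_nonneg_left huy hminv.le
        _ = 1 := inv_mul_cancel₀ hmpos.ne'
    have huF : u ∈ F := by
      have := (gauge_le_one_iff_mem_closure hFconv hFnhds).mp hgu
      rwa [hFc.closure_eq] at this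
    have hvF : v ∈ F := by
      have := (gauge_le_one_iff_mem_closure hFconv hFnhds).mp hgv
      rwa [hFc.closure_eq] at this
    have huv : u ≠ v := by
      intro h
      apply hxy
      have h2 : ω - x = ω - y := smul_right_injective X hminv.ne' h
      exact sub_right_injective h2
    have hmid : (1/2 : ℝ) • u + (1/2 : ℝ) • v ∈ interior F :=
      hFs huF hvF huv (by norm_num) (by norm_num) (by norm_num)
    have hmid_eq : (1/2 : ℝ) • u + (1/2 : ℝ) • v = m⁻¹ • (ω - z) := by
      rw [hu, hv, hz]
      module
    have hlt : gauge F (m⁻¹ • (ω - z)) < 1 := by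
      rw [← hmid_eq]
      exact interior_subset_gauge_lt_one F hmid
    have hge : (1:ℝ) ≤ gauge F (m⁻¹ • (ω - z)) := by
      rw [gauge_smul_of_nonneg hminv.le, smul_eq_mul]
      calc (1:ℝ) = m⁻¹ * m := (inv_mul_cancel₀ hmpos.ne').symm
        _ ≤ m⁻¹ * gauge F (ω - z) := mul_le_mul_of_nonneg_left hωz hminv.le
    exact absurd hlt (not_lt.mpr hge)
  · -- m = 0 : then ω = x and ω = y
    apply hxy
    have hx0 : gauge F (ω - x) = 0 :=
      le_antisymm (hmzero ▸ hux) (gauge_nonneg _)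
    have hy0 : gauge F (ω - y) = 0 :=
      le_antisymm (hmzero ▸ huy) (gauge_nonneg _)
    have hωx : ω = x := sub_eq_zero.mp ((gauge_eq_zero habs hvb).mp hx0)
    have hωy : ω = y := sub_eq_zero.mp ((gauge_eq_zero habs hvb).mp hy0)
    exact hωx.symm.trans hωy
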